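/- Let p > 3 be a prime and let A be an 𝔽_p-brace which is not right nilpotent whose multiplicative group (A,∘) is the group XV, with generators P, Q, R, S ∈ A satisfying the XV relations. Then for every a ∈ A^4 there is an integer α with 0 ≤ α < p such that a*Q = P^α, where P^α denotes the α-fold product P∘⋯∘P in the group (A,∘). -/

import Mathlib

/-- A left brace: `(A, +)` an abelian group, `(A, *)` a group (we write the brace
multiplication `∘` as `*`), with `a * (b + c) + a = a * b + a * c`. -/
class LeftBrace (A : Type*) extends Group A, AddCommGroup A where
  mul_add_eq : ∀ a b c : A, a * (b + c) + a = a * b + a * c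

namespace LeftBrace

/-- The star operation `a * b = a∘b - a - b` of a left brace. -/
def star {A : Type*} [LeftBrace A] (a b : A) : A := a * b - a - b

end LeftBrace

/-- An `𝔽ₚ`-brace: a left brace whose additive group is a `ZMod p`-vector space
with `a * (α • b) = α • (a * b)`. -/
class FpBrace (p : ℕ) (A : Type*) extends LeftBrace A, Module (ZMod p) A where
  star_smul' : ∀ (α : ZMod p) (a b : A),
    LeftBrace.star a (α • b) = α • LeftBrace.star a b

/-- The left chain `A^1 = A`, `A^{i+1} = A * A^i` (additive subgroup generated by
`a * b`, `a ∈ A`, `b ∈ A^i`). -/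
def lpow (A : Type*) [LeftBrace A] : ℕ → AddSubgroup A
  | 0 => ⊤
  | 1 => ⊤
  | (n+2) => AddSubgroup.closure
      {x : A | ∃ a : A, ∃ b ∈ lpow A (n+1), x = LeftBrace.star a b}

/-- The right chain `A^{(1)} = A`, `A^{(i+1)} = A^{(i)} * A`. -/
def rpow (A : Type*) [LeftBrace A] : ℕ → AddSubgroup A
  | 0 => ⊤
  | 1 => ⊤
  | (n+2) => AddSubgroup.closure
      {x : A | ∃ a ∈ rpow A (n+1), ∃ b : A, x = LeftBrace.star a b}

/-- A left brace is right nilpotent if `A^{(n)} = 0` for some `n`. -/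
def IsRightNilpotent (A : Type*) [LeftBrace A] : Prop := ∃ n, rpow A n = ⊥

/-- The defining relations of the group XV on generators `P, Q, R, S`. -/
def XVRelations {A : Type*} [LeftBrace A] (p : ℕ) (P Q R S : A) : Prop :=
  Q * S = S * Q * P ∧ Q * R = R * Q ∧ P * S = S * P ∧ P * Q = Q * P ∧
  P * R = R * P ∧ R * S = S * R * Q ∧
  P ^ p = 1 ∧ Q ^ p = 1 ∧ R ^ p = 1 ∧ S ^ p = 1

/-- The multiplicative group of the brace `A` is the group XV, with generators
`P, Q, R, S` satisfying the XV relations. -/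
def IsXVBrace (p : ℕ) (A : Type*) [LeftBrace A] (P Q R S : A) : Prop :=
  Nat.card A = p ^ 4 ∧ Subgroup.closure {P, Q, R, S} = ⊤ ∧ XVRelations p P Q R S


/-- The Multiplicative Table with parameters `y, i, k`. -/
def MultTable {p : ℕ} {A : Type*} [LeftBrace A] [Module (ZMod p) A]
    (P Q R S : A) (y i k : ZMod p) : Prop :=
  LeftBrace.star P P = 0 ∧ LeftBrace.star P Q = 0 ∧
  LeftBrace.star P R = y • S ∧ LeftBrace.star P S = 0 ∧
  LeftBrace.star Q P = 0 ∧ LeftBrace.star Q Q = -(y • S) ∧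
  LeftBrace.star Q R = ((2 : ZMod p)⁻¹ * y) • S ∧ LeftBrace.star Q S = 0 ∧
  LeftBrace.star R P = y • S ∧ LeftBrace.star R Q = ((2 : ZMod p)⁻¹ * y) • S ∧
  LeftBrace.star R R = i • P + k • S ∧ LeftBrace.star R S = 0 ∧
  LeftBrace.star S P = 0 ∧ LeftBrace.star S Q = -P ∧
  LeftBrace.star S R = -Q + P - ((2 : ZMod p)⁻¹ * y) • S ∧ LeftBrace.star S S = 0

/-- Additive subgroup generated by all `x * y`, `x ∈ X`, `y ∈ Y`. -/
def starSpan {A : Type*} [LeftBrace A] (X Y : AddSubgroup A) : AddSubgroup A :=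
  AddSubgroup.closure {z : A | ∃ x ∈ X, ∃ y ∈ Y, z = LeftBrace.star x y}

/-- An ideal of a left brace: an additive subgroup closed under all `λ_a` and
normal in `(A, ∘)`. -/
def IsBraceIdeal {A : Type*} [LeftBrace A] (I : AddSubgroup A) : Prop :=
  (∀ a : A, ∀ b ∈ I, a * b - a ∈ I) ∧ (∀ a : A, ∀ b ∈ I, a * b * a⁻¹ ∈ I)

/-- A brace is prime if the product of any two nonzero ideals is nonzero. -/
def IsPrimeBrace (A : Type*) [LeftBrace A] : Prop :=
  ∀ I J : AddSubgroup A, IsBraceIdeal I → IsBraceIdeal J → I ≠ ⊥ → J ≠ ⊥ →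
    starSpan I J ≠ ⊥

/-- Left chain of a nonassociative algebra given by a bilinear map. -/
def preLieL (R : Type*) [CommRing R] (V : Type*) [AddCommGroup V] [Module R V]
    (mul : V →ₗ[R] V →ₗ[R] V) : ℕ → Submodule R V
  | 0 => ⊤
  | 1 => ⊤
  | (n+2) => Submodule.span R
      {x : V | ∃ a : V, ∃ b ∈ preLieL R V mul (n+1), x = mul a b}

/-- Right chain of a nonassociative algebra given by a bilinear map. -/
def preLieR (R : Type*) [CommRing R] (V : Type*) [AddCommGroup V] [Module R V]
    (mul : V →ₗ[R] V →ₗ[R] V) : ℕ → Submodule R V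
  | 0 => ⊤
  | 1 => ⊤
  | (n+2) => Submodule.span R
      {x : V | ∃ a ∈ preLieR R V mul (n+1), ∃ b : V, x = mul a b}

/-- The defining relations of the group XIV on generators `P, Q, R, S`. -/
def XIVRelations {A : Type*} [LeftBrace A] (p : ℕ) (P Q R S : A) : Prop :=
  Q * P = P * Q ∧ Q * R = R * Q ∧ Q * S = S * Q ∧
  P * R = R * P ∧ P * S = S * P ∧ R * S = S * R * P ∧
  P ^ p = 1 ∧ Q ^ p = 1 ∧ R ^ p = 1 ∧ S ^ p = 1


namespace S5
open LeftBrace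
variable {A : Type*} [LeftBrace A]

lemma one_eq_zero : (1 : A) = 0 := by
  have h := LeftBrace.mul_add_eq (1:A) 0 0
  simpa using h

/-- The lambda map of a left brace. -/
def lam (g b : A) : A := g * b - g

lemma lam_add (g b c : A) : lam g (b+c) = lam g b + lam g c := by
  have h : g * (b + c) = g * b + g * c - g := by
    rw [← LeftBrace.mul_add_eq g b c]; abel
  simp only [lam, h]; abel

/-- `lam` as an `AddMonoidHom`. -/
def lamHom (g : A) : A →+ A := AddMonoidHom.mk' (lam g) (lam_add g)

lemma lam_zero (g : A) : lam g 0 = 0 := (lamHom g).map_zero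
lemma lam_neg (g b : A) : lam g (-b) = - lam g b := (lamHom g).map_neg b
lemma lam_sub (g b c : A) : lam g (b - c) = lam g b - lam g c := (lamHom g).map_sub b c

lemma lam_mul (g h b : A) : lam (g*h) b = lam g (lam h b) := by
  have h1 : lam g (lam h b) = lam g (h * b) - lam g h := by
    rw [show lam h b = h * b - h from rfl, lam_sub]
  rw [h1]; simp only [lam, mul_assoc]; abel

lemma lam_one (b : A) : lam 1 b = b := by
  rw [lam, one_mul, one_eq_zero, sub_zero]

lemma lam_inv_lam (g b : A) : lam g⁻¹ (lam g b) = b := by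
  rw [← lam_mul, inv_mul_cancel, lam_one]

lemma star_eq (g b : A) : star g b = lam g b - b := rfl

lemma mul_eq (g b : A) : g * b = g + lam g b := by rw [lam]; abel

lemma lam_eq_star (g b : A) : lam g b = star g b + b := by rw [star_eq]; abel

lemma inv_mul_eq_lam (g h : A) : g⁻¹ * h = lam g⁻¹ (h - g) := by
  rw [lam_sub]
  simp only [lam]
  rw [inv_mul_cancel, one_eq_zero]
  abel

/-! ### lpow lemmas -/

lemma lpow_one : lpow A 1 = ⊤ := rfl

lemma star_mem_lpow (x : A) : ∀ {n : ℕ} {w : A}, w ∈ lpow A n → star x w ∈ lpow A (n+1)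
  | 0, w, _ => by rw [lpow_one]; trivial
  | (n+1), w, hw => AddSubgroup.subset_closure ⟨x, w, hw, rfl⟩

lemma lpow_succ_le : ∀ n : ℕ, lpow A (n+1) ≤ lpow A n
  | 0 => le_top
  | 1 => le_top
  | (n+2) => by
      show lpow A (n+3) ≤ lpow A (n+2)
      rw [show lpow A (n+3) = AddSubgroup.closure
        {x : A | ∃ a : A, ∃ b ∈ lpow A (n+2), x = LeftBrace.star a b} from rfl]
      rw [AddSubgroup.closure_le]
      rintro x ⟨a, b, hb, rfl⟩
      exact AddSubgroup.subset_closure ⟨a, b, lpow_succ_le (n+1) hb, rfl⟩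

lemma lam_mem_lpow (x : A) : ∀ {n : ℕ} {w : A}, w ∈ lpow A n → lam x w ∈ lpow A n
  | 0, w, _ => trivial
  | 1, w, _ => trivial
  | (n+2), w, hw => by
      induction hw using AddSubgroup.closure_induction with
      | mem y hy =>
          obtain ⟨a, b, hb, rfl⟩ := hy
          have key : lam x (star a b) = star (x*a) b - star x b := by
            rw [star_eq a b, lam_sub, ← lam_mul]
            simp only [star_eq]; abel
          rw [key]
          exact sub_mem (AddSubgroup.subset_closure ⟨x*a, b, hb, rfl⟩)
            (AddSubgroup.subset_closure ⟨x, b, hb, rfl⟩)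
      | zero => rw [lam_zero]; exact zero_mem _
      | add u v _ _ hu hv => rw [lam_add]; exact add_mem hu hv
      | neg u _ hu => rw [lam_neg]; exact neg_mem hu

/-- The key drop-by-two property of commutators. -/
lemma comm_star_mem (g h : A) {n : ℕ} {w : A} (hw : w ∈ lpow A n) :
    star (g⁻¹ * h⁻¹ * g * h) w ∈ lpow A (n+2) := by
  have e1 : lam (g⁻¹ * h⁻¹ * g * h) w = lam g⁻¹ (lam h⁻¹ (lam g (lam h w))) := by
    rw [lam_mul, lam_mul, lam_mul]
  have e2 : w = lam g⁻¹ (lam h⁻¹ (lam h (lam g w))) := by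
    rw [lam_inv_lam, lam_inv_lam]
  have e3 : star (g⁻¹ * h⁻¹ * g * h) w
      = lam g⁻¹ (lam h⁻¹ (lam g (lam h w) - lam h (lam g w))) := by
    rw [star_eq, e1]
    nth_rewrite 2 [e2]
    rw [← lam_sub, ← lam_sub]
  have e4 : lam g (lam h w) - lam h (lam g w)
      = star g (star h w) - star h (star g w) := by
    have t1 : lam g (lam h w) = star g (star h w) + star h w + (star g w + w) := by
      rw [lam_eq_star h w, lam_add, lam_eq_star g (star h w), lam_eq_star g w]
    have t2 : lam h (lam g w) = star h (star g w) + star g w + (star h w + w) := by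
      rw [lam_eq_star g w, lam_add, lam_eq_star h (star g w), lam_eq_star h w]
    rw [t1, t2]; abel
  rw [e3, e4]
  exact lam_mem_lpow _ (lam_mem_lpow _
    (sub_mem (star_mem_lpow _ (star_mem_lpow _ hw)) (star_mem_lpow _ (star_mem_lpow _ hw))))

/-! ### The coinvariants lemma -/

lemma coinv {p : ℕ} [Fact p.Prime] {A : Type*} [FpBrace p A]
    (hcard : Nat.card A = p ^ 4) (W : AddSubgroup A) (hW : W ≠ ⊥)
    (hinv : ∀ x : A, ∀ w ∈ W, lam x w ∈ W) :
    ∃ W' : AddSubgroup A, W' < W ∧ ∀ (x : A), ∀ w ∈ W, star x w ∈ W' := by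
  have hp : p.Prime := Fact.out
  haveI : Finite A := Nat.finite_of_card_ne_zero (by rw [hcard]; exact pow_ne_zero 4 hp.pos.ne')
  haveI : NeZero p := ⟨hp.pos.ne'⟩
  let Wm : Submodule (ZMod p) A :=
    { carrier := (W : Set A)
      add_mem' := fun ha hb => W.add_mem ha hb
      zero_mem' := W.zero_mem
      smul_mem' := by
        intro c x hx
        obtain ⟨n, rfl⟩ := ZMod.natCast_zmod_surjective c
        rw [Nat.cast_smul_eq_nsmul]
        exact W.nsmul_mem hx n }
  have hlam_smul : ∀ (x : A) (c : ZMod p) (b : A), lam x (c • b) = c • lam x b := by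
    intro x c b
    obtain ⟨n, rfl⟩ := ZMod.natCast_zmod_surjective c
    rw [Nat.cast_smul_eq_nsmul, Nat.cast_smul_eq_nsmul]
    exact (lamHom x).map_nsmul n b
  let r : A → (Wm →ₗ[ZMod p] Wm) := fun x =>
    { toFun := fun w => ⟨lam x ↑w, hinv x ↑w w.2⟩
      map_add' := fun u v => Subtype.ext (by simpa using lam_add x ↑u ↑v)
      map_smul' := fun c v => Subtype.ext (by simpa using hlam_smul x c ↑v) }
  have hr_apply : ∀ (x : A) (w : Wm), ((r x w : A)) = lam x ↑w := fun _ _ => rfl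
  have hr_mul : ∀ (x y : A) (w : Wm), r (x*y) w = r x (r y w) :=
    fun x y w => Subtype.ext (lam_mul x y ↑w)
  let D := Wm →ₗ[ZMod p] (ZMod p)
  haveI : Finite D := Finite.of_injective (fun f : D => (f : Wm → ZMod p)) DFunLike.coe_injective
  letI smulInst : SMul A D := ⟨fun g f => f.comp (r g⁻¹)⟩
  have hsmul_def : ∀ (g : A) (f : D), g • f = f.comp (r g⁻¹) := fun _ _ => rfl
  letI : MulAction A D :=
    { smulInst with
      one_smul := fun f => by
        rw [hsmul_def]
        ext w
        show f (r 1⁻¹ w) = f w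
        congr 1
        exact Subtype.ext (by rw [hr_apply, inv_one, lam_one])
      mul_smul := fun g h f => by
        rw [hsmul_def, hsmul_def, hsmul_def]
        ext w
        show f (r (g*h)⁻¹ w) = f (r h⁻¹ (r g⁻¹ w))
        congr 1
        rw [mul_inv_rev, hr_mul] }
  have hPG : IsPGroup p A := IsPGroup.of_card hcard
  have hmod := hPG.card_modEq_card_fixedPoints D
  obtain ⟨w₀, hw₀W, hw₀⟩ : ∃ w₀ ∈ W, w₀ ≠ 0 := by
    by_contra hc
    push_neg at hc
    exact hW (by
      rw [eq_bot_iff]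
      intro x hx
      simp [hc x hx])
  have hD_nontrivial : Nontrivial D := by
    have hne : ¬ (∀ φ : Module.Dual (ZMod p) Wm, φ ⟨w₀, hw₀W⟩ = 0) := by
      rw [Module.forall_dual_apply_eq_zero_iff (ZMod p)]
      intro hzero
      exact hw₀ (by simpa using congrArg (Subtype.val) hzero)
    push_neg at hne
    obtain ⟨φ, hφ⟩ := hne
    exact ⟨⟨φ, 0, fun h => hφ (by rw [h]; rfl)⟩⟩
  have hpD : p ∣ Nat.card D := by
    letI := Fintype.ofFinite D
    rw [Nat.card_eq_fintype_card]
    rw [Module.card_eq_pow_finrank (K := ZMod p) (V := D), ZMod.card]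
    refine dvd_pow_self p ?_
    have : 0 < Module.finrank (ZMod p) D := Module.finrank_pos_iff.mpr hD_nontrivial
    omega
  have h0fix : (0 : D) ∈ MulAction.fixedPoints A D := by
    intro g
    rw [hsmul_def]
    exact LinearMap.zero_comp _
  have hfixcard : p ∣ Nat.card (MulAction.fixedPoints A D) :=
    (Nat.modEq_zero_iff_dvd.mp ((hmod.symm.trans (Nat.modEq_zero_iff_dvd.mpr hpD))))
  haveI : Nonempty (MulAction.fixedPoints A D) := ⟨⟨0, h0fix⟩⟩
  have hcardpos : 0 < Nat.card (MulAction.fixedPoints A D) := Nat.card_pos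
  have h2 : 1 < Nat.card (MulAction.fixedPoints A D) := by
    rcases hfixcard with ⟨k, hk⟩
    have hp2 : 2 ≤ p := hp.two_le
    rcases Nat.eq_zero_or_pos k with h | h
    · subst h; rw [mul_zero] at hk; omega
    · have h21 : 2 * 1 ≤ p * k := Nat.mul_le_mul hp2 h
      omega
  haveI : Nontrivial (MulAction.fixedPoints A D) :=
    Finite.one_lt_card_iff_nontrivial.mp h2
  obtain ⟨ffix, hfne⟩ := exists_ne (⟨0, h0fix⟩ : MulAction.fixedPoints A D)
  set f : D := ↑ffix with hfdef
  have hf0 : f ≠ 0 := fun h => hfne (Subtype.ext h)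
  have hfixed : ∀ g : A, g • f = f := ffix.2
  have hkey : ∀ (x : A) (w : Wm), f (r x w) = f w := by
    intro x w
    have := hfixed x⁻¹
    rw [hsmul_def, inv_inv] at this
    exact DFunLike.congr_fun this w
  refine ⟨((LinearMap.ker f).map Wm.subtype).toAddSubgroup, ?_, ?_⟩
  · constructor
    · rintro a ha
      obtain ⟨v, hv, rfl⟩ := Submodule.mem_map.mp ha
      exact v.2
    · intro hle
      obtain ⟨u, hu⟩ := DFunLike.ne_iff.mp hf0
      have huW : (u : A) ∈ W := u.2
      have := hle huW
      obtain ⟨v, hv, hvu⟩ := Submodule.mem_map.mp this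
      have : v = u := Subtype.ext hvu
      rw [this] at hv
      exact hu ((by simpa using hv : f u = 0).trans rfl)
  · intro x w hw
    have hmem : (⟨lam x w, hinv x w hw⟩ - ⟨w, hw⟩ : Wm) ∈ LinearMap.ker f := by
      rw [LinearMap.mem_ker, map_sub]
      have : f (r x ⟨w, hw⟩) = f ⟨w, hw⟩ := hkey x ⟨w, hw⟩
      rw [show (⟨lam x w, hinv x w hw⟩ : Wm) = r x ⟨w, hw⟩ from rfl, this, sub_self]
    refine Submodule.mem_map.mpr ⟨_, hmem, ?_⟩
    rw [star_eq]
    rfl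

/-! ### Chain termination -/

lemma lpow_five {p : ℕ} [Fact p.Prime] {A : Type*} [FpBrace p A]
    (hcard : Nat.card A = p ^ 4) : lpow A 5 = ⊥ := by
  have hp : p.Prime := Fact.out
  haveI : Finite A := Nat.finite_of_card_ne_zero (by rw [hcard]; exact pow_ne_zero 4 hp.pos.ne')
  have hmono : ∀ (W1 W2 : AddSubgroup A), W1 ≤ W2 → Nat.card W1 ≤ Nat.card W2 := by
    intro W1 W2 h
    have h2 : Nat.card (W1 : Set A) ≤ Nat.card (W2 : Set A) := by
      rw [Nat.card_coe_set_eq, Nat.card_coe_set_eq]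
      exact Set.ncard_le_ncard h (Set.toFinite _)
    exact h2
  have hstrict : ∀ (W1 W2 : AddSubgroup A), W1 < W2 → Nat.card W1 < Nat.card W2 := by
    intro W1 W2 h
    have h2 : Nat.card (W1 : Set A) < Nat.card (W2 : Set A) := by
      rw [Nat.card_coe_set_eq, Nat.card_coe_set_eq]
      exact Set.ncard_lt_ncard (SetLike.coe_ssubset_coe.mpr h) (Set.toFinite _)
    exact h2
  have key : ∀ n : ℕ, n ≤ 4 → Nat.card (lpow A (n+1)) ≤ p ^ (4 - n) := by
    intro n
    induction n with
    | zero =>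
        intro _
        have htop : Nat.card (lpow A 1) = Nat.card A :=
          Nat.card_congr AddSubgroup.topEquiv.toEquiv
        rw [htop, hcard]
    | succ n ih =>
        intro hn4
        by_cases hb : lpow A (n+1) = ⊥
        · have hbot : lpow A (n+2) = ⊥ := le_bot_iff.mp (hb ▸ lpow_succ_le (n+1))
          rw [hbot]
          have h1 : Nat.card ((⊥ : AddSubgroup A)) = 1 := Nat.card_unique
          rw [h1]
          exact Nat.one_le_iff_ne_zero.mpr (pow_ne_zero _ hp.pos.ne')
        · obtain ⟨W', hlt, hgen⟩ := coinv hcard (lpow A (n+1)) hb (fun x w hw => lam_mem_lpow x hw)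
          have hsub : lpow A (n+2) ≤ W' := by
            rw [show lpow A (n+2) = AddSubgroup.closure
              {x : A | ∃ a : A, ∃ b ∈ lpow A (n+1), x = LeftBrace.star a b} from rfl]
            rw [AddSubgroup.closure_le]
            rintro z ⟨a, b, hb', rfl⟩
            exact hgen a b hb'
          have hc1 : Nat.card (lpow A (n+2)) ≤ Nat.card W' := hmono _ _ hsub
          have hc2 : Nat.card W' < Nat.card (lpow A (n+1)) := hstrict _ _ hlt
          have hc3 : Nat.card (lpow A (n+1)) ≤ p ^ (4-n) := ih (by omega)
          obtain ⟨j, hj4, hjeq⟩ := (Nat.dvd_prime_pow hp).mp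
            (hcard ▸ AddSubgroup.card_addSubgroup_dvd_card (lpow A (n+2)))
          have hlt2 : p ^ j < p ^ (4-n) := by omega
          have hj : j < 4 - n := (Nat.pow_lt_pow_iff_right hp.one_lt).mp hlt2
          rw [hjeq]
          exact Nat.pow_le_pow_right hp.pos (by omega)
  have h5 : Nat.card (lpow A 5) ≤ 1 := by simpa using key 4 le_rfl
  exact AddSubgroup.eq_bot_of_card_le _ h5


/-! ### Group-theoretic lemmas -/

section GroupLemmas
variable {G : Type*} [Group G]

lemma P_central {P Q R S : G} (hclosure : Subgroup.closure {P, Q, R, S} = ⊤)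
    (h1 : P*Q = Q*P) (h2 : P*R = R*P) (h3 : P*S = S*P) : ∀ g : G, P * g = g * P := by
  have hle : Subgroup.closure {P, Q, R, S} ≤ Subgroup.centralizer {P} := by
    rw [Subgroup.closure_le]
    intro x hx
    rw [SetLike.mem_coe, Subgroup.mem_centralizer_iff]
    intro h hh
    rw [Set.mem_singleton_iff] at hh
    rw [hh]
    simp only [Set.mem_insert_iff, Set.mem_singleton_iff] at hx
    rcases hx with h' | h' | h' | h' <;> rw [h']
    · exact h1
    · exact h2
    · exact h3
  intro g
  have hg : g ∈ Subgroup.centralizer {P} := hle (by rw [hclosure]; trivial)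
  exact (Subgroup.mem_centralizer_iff.mp hg P (Set.mem_singleton P))

lemma conj_formula {P Q R S : G} (hclosure : Subgroup.closure {P, Q, R, S} = ⊤)
    (rel1 : Q*S = S*Q*P) (rel2 : Q*R = R*Q) (hc : ∀ g : G, P*g = g*P) :
    ∀ g : G, ∃ m : ℤ, g * Q * g⁻¹ = Q * P ^ m := by
  have hcom : ∀ g : G, Commute P g := fun g => hc g
  intro g
  have hg : g ∈ Subgroup.closure {P, Q, R, S} := by rw [hclosure]; trivial
  induction hg using Subgroup.closure_induction with
  | mem x hx =>
      simp only [Set.mem_insert_iff, Set.mem_singleton_iff] at hx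
      rcases hx with h' | h' | h' | h' <;> rw [h']
      · exact ⟨0, by rw [zpow_zero, mul_one, hc Q, mul_inv_cancel_right]⟩
      · exact ⟨0, by rw [zpow_zero, mul_one, mul_inv_cancel_right]⟩
      · exact ⟨0, by rw [zpow_zero, mul_one, ← rel2, mul_inv_cancel_right]⟩
      · refine ⟨-1, ?_⟩
        have h' : Q * S * P⁻¹ = S * Q := by rw [rel1, mul_inv_cancel_right]
        rw [zpow_neg_one, ← h', mul_assoc (Q*S) P⁻¹ S⁻¹, ((hcom S).inv_inv).eq]
        group
  | one => exact ⟨0, by simp⟩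
  | mul x y _ _ ihx ihy =>
      obtain ⟨m, hm⟩ := ihx
      obtain ⟨k, hk⟩ := ihy
      refine ⟨m + k, ?_⟩
      have cc : P ^ k * x⁻¹ = x⁻¹ * P ^ k := ((hcom x⁻¹).zpow_left k).eq
      calc x*y*Q*(x*y)⁻¹ = x*(y*Q*y⁻¹)*x⁻¹ := by group
        _ = x*(Q*P^k)*x⁻¹ := by rw [hk]
        _ = x*Q*(P^k*x⁻¹) := by group
        _ = x*Q*(x⁻¹*P^k) := by rw [cc]
        _ = (x*Q*x⁻¹)*P^k := by group
        _ = Q*P^m*P^k := by rw [hm]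
        _ = Q*P^(m+k) := by rw [mul_assoc, ← zpow_add]
  | inv x _ ihx =>
      obtain ⟨m, hm⟩ := ihx
      refine ⟨-m, ?_⟩
      have cc : P ^ m * x = x * P ^ m := ((hcom x).zpow_left m).eq
      have h1 : Q = x⁻¹*Q*x⁻¹⁻¹*P^m := by
        conv_lhs => rw [show Q = x⁻¹*(x*Q*x⁻¹)*x by group]
        rw [hm, inv_inv]
        rw [show x⁻¹*(Q*P^m)*x = x⁻¹*Q*(P^m*x) by group, cc]
        group
      rw [zpow_neg]
      exact eq_mul_inv_iff_mul_eq.mpr h1.symm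

end GroupLemmas

end S5

/-- in a not right nilpotent `𝔽ₚ`-brace with multiplicative group XV,
for every `a ∈ A⁴`, `a * Q = P^α` for some `0 ≤ α < p`. -/
theorem statement5 (p : ℕ) (hp : p.Prime) (hp3 : 3 < p) (A : Type*) [FpBrace p A]
    (hnil : ¬ IsRightNilpotent A)
    (P Q R S : A) (hXV : IsXVBrace p A P Q R S) :
    ∀ a ∈ lpow A 4, ∃ α : ℕ, α < p ∧ LeftBrace.star a Q = P ^ α := by
  intro a ha
  haveI : Fact p.Prime := ⟨hp⟩
  obtain ⟨hcard, hclosure, rel1, rel2, rel3, rel4, rel5, rel6, relP, _, _, _⟩ := hXV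
  have h5 : lpow A 5 = ⊥ := S5.lpow_five hcard
  -- every element of A⁴ is fixed by all lambda maps
  have hfix : ∀ x : A, LeftBrace.star x a = 0 := by
    intro x
    have h := S5.star_mem_lpow x ha
    rw [h5] at h
    exact AddSubgroup.mem_bot.mp h
  have hfa : ∀ x : A, S5.lam x a = a := by
    intro x
    rw [S5.lam_eq_star, hfix x, zero_add]
  -- P and Q are commutators
  have hPcomm : P = Q⁻¹ * S⁻¹ * Q * S := by
    apply mul_left_cancel (a := S * Q)
    rw [← rel1]; group
  have hQcomm : Q = R⁻¹ * S⁻¹ * R * S := by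
    apply mul_left_cancel (a := S * R)
    rw [← rel6]; group
  -- Q ∈ A², P ∈ A³
  have hQmem : Q ∈ lpow A 2 := by
    have hform : Q = S5.lam (S*R)⁻¹ (R*S - S*R) := by
      rw [← S5.inv_mul_eq_lam]
      apply mul_left_cancel (a := S * R)
      rw [← rel6]; group
    have hdiff : R*S - S*R = LeftBrace.star R S - LeftBrace.star S R := by
      simp only [LeftBrace.star]; abel
    rw [hform, hdiff]
    have h1 : LeftBrace.star R S ∈ lpow A 2 := S5.star_mem_lpow R (by trivial : S ∈ lpow A 1)
    have h2 : LeftBrace.star S R ∈ lpow A 2 := S5.star_mem_lpow S (by trivial : R ∈ lpow A 1)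
    exact S5.lam_mem_lpow _ (sub_mem h1 h2)
  have hPmem : P ∈ lpow A 3 := by
    have hform : P = S5.lam (S*Q)⁻¹ (Q*S - S*Q) := by
      rw [← S5.inv_mul_eq_lam]
      apply mul_left_cancel (a := S * Q)
      rw [← rel1]; group
    have hdiff : Q*S - S*Q = LeftBrace.star Q S - LeftBrace.star S Q := by
      simp only [LeftBrace.star]; abel
    rw [hform, hdiff]
    have h1 : LeftBrace.star Q S ∈ lpow A 3 := by
      rw [hQcomm]
      exact S5.comm_star_mem R S (by trivial : S ∈ lpow A 1)
    have h2 : LeftBrace.star S Q ∈ lpow A 3 := S5.star_mem_lpow S hQmem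
    exact S5.lam_mem_lpow _ (sub_mem h1 h2)
  -- Q * P = 0 (star), i.e. lam Q P = P
  have hQP : LeftBrace.star Q P = 0 := by
    have h : LeftBrace.star Q P ∈ lpow A 5 := by
      rw [hQcomm]
      exact S5.comm_star_mem R S hPmem
    rw [h5] at h
    exact AddSubgroup.mem_bot.mp h
  have hlamQP : S5.lam Q P = P := by
    rw [S5.lam_eq_star, hQP, zero_add]
  -- P is central
  have hc : ∀ g : A, P * g = g * P := S5.P_central hclosure rel4 rel5 rel3
  -- conjugation formula for Q
  obtain ⟨m, hm⟩ := S5.conj_formula hclosure rel1 rel2 hc a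
  -- a is "additively central": a⁻¹ = -a and a∘Q∘a⁻¹ = lam a Q
  have hainv : a⁻¹ = -a := by
    have h1 := hfa a⁻¹
    rw [S5.lam, inv_mul_cancel, S5.one_eq_zero, zero_sub] at h1
    exact neg_eq_iff_eq_neg.mp h1
  have hconj : a * Q * a⁻¹ = S5.lam a Q := by
    rw [hainv, S5.mul_eq (a*Q) (-a), S5.lam_mul a Q (-a), S5.lam_neg, hfa Q,
      S5.lam_neg, hfa a, S5.mul_eq a Q]
    abel
  -- lam Q fixes all powers of P
  have hlampow : ∀ k : ℕ, S5.lam Q (P^k) = P^k := by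
    intro k
    induction k with
    | zero => rw [pow_zero, S5.one_eq_zero, S5.lam_zero]
    | succ k ih =>
        have hPQ : Commute P Q := hc Q
        have hcomk : Q * P^k = P^k * Q := (hPQ.pow_left k).eq.symm
        rw [pow_succ, S5.mul_eq (P^k) P, S5.lam_add, ih, ← S5.lam_mul, hcomk,
          S5.lam_mul, hlamQP, ← S5.mul_eq]
  -- reduce the exponent mod p
  have hppos : (0:ℤ) < (p:ℤ) := by exact_mod_cast hp.pos
  have h0p : (0:ℤ) ≤ m % (p:ℤ) := Int.emod_nonneg m hppos.ne'
  have hmp : m % (p:ℤ) < (p:ℤ) := Int.emod_lt_of_pos m hppos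
  have hPp : P ^ ((p:ℕ):ℤ) = 1 := by rw [zpow_natCast]; exact relP
  have hmeq : P ^ m = P ^ ((m % (p:ℤ)).toNat) := by
    have h1 : P ^ m = P ^ (m % (p:ℤ)) := by
      conv_lhs => rw [← Int.mul_ediv_add_emod m (p:ℤ)]
      rw [zpow_add, zpow_mul, hPp, one_zpow, one_mul]
    rw [h1, ← zpow_natCast, Int.toNat_of_nonneg h0p]
  refine ⟨(m % (p:ℤ)).toNat, ?_, ?_⟩
  · omega
  · calc LeftBrace.star a Q = a*Q*a⁻¹ - Q := by rw [S5.star_eq, hconj]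
      _ = Q*P^m - Q := by rw [hm]
      _ = S5.lam Q (P^m) := by rw [S5.lam]
      _ = S5.lam Q (P^((m % (p:ℤ)).toNat)) := by rw [hmeq]
      _ = P^((m % (p:ℤ)).toNat) := hlampow _
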